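/- Fix positive integers k, W, T, U with W ≤ T and reals ε, δ, α ≥ 0, β ∈ [0,1]. If there exists an (ε/2, δ/2)-DP algorithm (under event-level neighbors) for fixed-window freq≥k with window W in the bundle setting on datasets with time horizon 2W over universe [U] having (α,β)-utility, then there exists an (ε,δ)-DP algorithm (under event-level neighbors) for fixed-window freq≥k with window W in the bundle setting on datasets with time horizon T over universe [U] having (α,β)-utility. -/

import Mathlib

open Finset

/-- `(ε, δ)`-differential privacy of a randomized algorithm `M`
with respect to the neighboring relation `neighbor`. -/
def IsDP {I O : Type} (neighbor : I → I → Prop) (M : I → PMF O) (ε δ : ℝ) : Prop :=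
  ∀ D D', neighbor D D' → ∀ s : Set O,
    (M D).toOuterMeasure s ≤
      ENNReal.ofReal (Real.exp ε) * (M D').toOuterMeasure s + ENNReal.ofReal δ

/-- `(α, β)`-utility: for every input and every query, with probability at least
`1 - β` the output estimate is within `α` of the true value. -/
def HasUtility {I Q : Type} (M : I → PMF (Q → ℝ)) (val : I → Q → ℝ) (α β : ℝ) : Prop :=
  ∀ D q, ENNReal.ofReal (1 - β) ≤ (M D).toOuterMeasure {o | |o q - val D q| ≤ α}

/-- A dataset with time horizon `T` over universe `[U]`:
`S t u` is the multiplicity of item `u` at (0-indexed) time step `t`. -/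
abbrev Dataset (T U : ℕ) : Type := Fin T → Fin U → ℕ

/-- `S^{[t₁, t₂]}_u` with 1-indexed times: total multiplicity of item `u`
during time steps `t₁, ..., t₂`. -/
def winCount {T U : ℕ} (S : Dataset T U) (t₁ t₂ : ℕ) (u : Fin U) : ℕ :=
  ∑ t : Fin T, if t₁ ≤ (t : ℕ) + 1 ∧ (t : ℕ) + 1 ≤ t₂ then S t u else 0

/-- `freq≥k(S^{[t₁,t₂]})`: the number of items occurring at least `k` times. -/
def freqGe {T U : ℕ} (k : ℕ) (S : Dataset T U) (t₁ t₂ : ℕ) : ℕ :=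
  (Finset.univ.filter fun u : Fin U => k ≤ winCount S t₁ t₂ u).card

/-- `freq=k(S^{[t₁,t₂]})`: the number of items occurring exactly `k` times. -/
def freqEq {T U : ℕ} (k : ℕ) (S : Dataset T U) (t₁ t₂ : ℕ) : ℕ :=
  (Finset.univ.filter fun u : Fin U => winCount S t₁ t₂ u = k).card

/-- Item-level neighbors: the datasets agree on all items except possibly one. -/
def ItemNeighbor {T U : ℕ} (S S' : Dataset T U) : Prop :=
  ∃ u : Fin U, ∀ u' : Fin U, u' ≠ u → ∀ t : Fin T, S t u' = S' t u'

/-- Event-level neighbors: the total (absolute) difference of multiplicities is at most 1. -/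
def EventNeighbor {T U : ℕ} (S S' : Dataset T U) : Prop :=
  (∑ t : Fin T, ∑ u : Fin U, ((S t u : ℤ) - (S' t u : ℤ)).natAbs) ≤ 1

/-- Singleton setting: at most one item arrives at each time step. -/
def IsSingleton {T U : ℕ} (S : Dataset T U) : Prop :=
  ∀ t : Fin T, (∑ u : Fin U, S t u) ≤ 1

/-- Cumulative `freq≥k` queries: the query indexed by `t : Fin T` is
`freq≥k(S^{[1, t+1]})`. -/
def cumVal (k : ℕ) {T U : ℕ} (S : Dataset T U) (t : Fin T) : ℝ :=
  (freqGe k S 1 ((t : ℕ) + 1) : ℝ)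

/-- Time-window `freq≥k` queries: the query indexed by a pair `t₁ ≤ t₂` (0-indexed)
is `freq≥k(S^{[t₁+1, t₂+1]})`. -/
def twVal (k : ℕ) {T U : ℕ} (S : Dataset T U)
    (p : {p : Fin T × Fin T // p.1 ≤ p.2}) : ℝ :=
  (freqGe k S ((p.1.1 : ℕ) + 1) ((p.1.2 : ℕ) + 1) : ℝ)

/-- Time-window `freq=k` queries. -/
def twValEq (k : ℕ) {T U : ℕ} (S : Dataset T U)
    (p : {p : Fin T × Fin T // p.1 ≤ p.2}) : ℝ :=
  (freqEq k S ((p.1.1 : ℕ) + 1) ((p.1.2 : ℕ) + 1) : ℝ)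

/-- Fixed-window `freq≥k` queries with window `W`: the query indexed by
`i : Fin (T - W + 1)` is `freq≥k(S^{[i+1, i+W]})`. -/
def fwVal (k W : ℕ) {T U : ℕ} (S : Dataset T U) (i : Fin (T - W + 1)) : ℝ :=
  (freqGe k S ((i : ℕ) + 1) ((i : ℕ) + W) : ℝ)

/-- Neighboring inputs for range-query-type problems: they differ by adding
or removing a single point. -/
def AddRemoveNeighbor {P : Type} (D D' : Multiset P) : Prop :=
  ∃ x : P, D' = x ::ₘ D ∨ D = x ::ₘ D'

/-- 1d-range queries over a linearly ordered finite domain `Fin M`: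
the query indexed by `y₁ ≤ y₂` counts the points in `[y₁, y₂]`. -/
def range1Val {M : ℕ} (D : Multiset (Fin M))
    (p : {p : Fin M × Fin M // p.1 ≤ p.2}) : ℝ :=
  ((D.filter fun x => p.1.1 ≤ x ∧ x ≤ p.1.2).card : ℝ)

/-- 2d-range queries over the domain `Fin M × Fin M`: the query indexed by a pair
`(y¹, y²)` counts the points `x` with `y¹ ⪯ x ⪯ y²` coordinatewise. -/
def range2Val {M : ℕ} (D : Multiset (Fin M × Fin M))
    (p : (Fin M × Fin M) × (Fin M × Fin M)) : ℝ :=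
  ((D.filter fun x =>
      p.1.1 ≤ x.1 ∧ p.1.2 ≤ x.2 ∧ x.1 ≤ p.2.1 ∧ x.2 ≤ p.2.2).card : ℝ)

/-- Neighboring inputs for the linear query problem: they differ
in a single coordinate. -/
def CoordNeighbor {m : ℕ} (x x' : Fin m → Bool) : Prop :=
  ∃ u : Fin m, ∀ u' : Fin m, u' ≠ u → x u' = x' u'

/-- The `A`-linear queries: the query indexed by `i : Fin d` is `(A x)_i`. -/
def linVal {d m : ℕ} (A : Fin d → Fin m → Bool) (x : Fin m → Bool) (i : Fin d) : ℝ :=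
  ((∑ u : Fin m, if A i u && x u then 1 else 0 : ℕ) : ℝ)

/-- The 1-way marginal queries: the query indexed by `i : Fin d` is the `i`-th
coordinate of the sum of the input vectors. -/
def margVal {d : ℕ} (D : Multiset (Fin d → Bool)) (i : Fin d) : ℝ :=
  (((D.map fun x => if x i then (1 : ℕ) else 0).sum : ℕ) : ℝ)

open scoped ENNReal NNReal

namespace HR

noncomputable section

variable {X Y : Type}

def DPClose (p q : PMF X) (c d : ℝ≥0∞) : Prop :=
  ∀ s : Set X, p.toOuterMeasure s ≤ c * q.toOuterMeasure s + d

lemma toOM_le_one (p : PMF X) (s : Set X) : p.toOuterMeasure s ≤ 1 := by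
  rw [PMF.toOuterMeasure_apply, ← PMF.tsum_coe p]
  exact ENNReal.tsum_le_tsum fun x => Set.indicator_apply_le (fun _ => le_rfl)

lemma dpclose_refl (p : PMF X) : DPClose p p 1 0 := by
  intro s; simp

lemma dpclose_mono {p q : PMF X} {c d c' d' : ℝ≥0∞}
    (h : DPClose p q c d) (hc : c ≤ c') (hd : d ≤ d') : DPClose p q c' d' := by
  intro s
  exact (h s).trans (add_le_add (mul_le_mul_left hc _) hd)

lemma tsum_mul_nat (r : PMF X) (M : X → ℕ) (N : ℕ) (hM : ∀ x, M x ≤ N) :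
    ∑' x, r x * (M x : ℝ≥0∞) =
      ∑ j ∈ Finset.range N, r.toOuterMeasure {x | j < M x} := by
  classical
  have hpt : ∀ x, r x * (M x : ℝ≥0∞) =
      ∑ j ∈ Finset.range N, (if j < M x then r x else 0) := by
    intro x
    have h1 : ((M x : ℝ≥0∞)) = ∑ j ∈ Finset.range N, (if j < M x then (1:ℝ≥0∞) else 0) := by
      rw [Finset.sum_boole]
      congr 1
      have : (Finset.range N).filter (fun j => j < M x) = Finset.range (M x) := by
        ext j; simp only [Finset.mem_filter, Finset.mem_range]
        constructor
        · exact fun h => h.2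
        · exact fun h => ⟨lt_of_lt_of_le h (hM x), h⟩
      rw [this, Finset.card_range]
    rw [h1, Finset.mul_sum]
    exact Finset.sum_congr rfl fun j _ => by rw [mul_ite, mul_one, mul_zero]
  calc ∑' x, r x * (M x : ℝ≥0∞)
      = ∑' x, ∑ j ∈ Finset.range N, (if j < M x then r x else 0) := tsum_congr hpt
    _ = ∑ j ∈ Finset.range N, ∑' x, (if j < M x then r x else 0) :=
        Summable.tsum_finsetSum (fun i _ => ENNReal.summable)
    _ = ∑ j ∈ Finset.range N, r.toOuterMeasure {x | j < M x} := by
        refine Finset.sum_congr rfl fun j _ => ?_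
        rw [PMF.toOuterMeasure_apply]
        exact (tsum_congr fun x => by rw [Set.indicator_apply]; simp [Set.mem_setOf_eq]).symm

/-- The expectation lemma: DP-closeness on sets implies closeness of expectations
of `[0,1]`-valued functions. -/
lemma tsum_mul_le_of_dpclose {p q : PMF X} {c d : ℝ≥0∞}
    (H : DPClose p q c d) (g : X → ℝ≥0∞) (hg : ∀ x, g x ≤ 1) :
    ∑' x, p x * g x ≤ c * ∑' x, q x * g x + d := by
  classical
  by_cases hq : ∑' x, q x * g x = 0
  · -- q-expectation zero: bound p-side by d directly
    have hqx : ∀ x, q x * g x = 0 := by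
      intro x
      have := (ENNReal.tsum_eq_zero.mp hq) x
      exact this
    have hq0 : q.toOuterMeasure {x | g x ≠ 0} = 0 := by
      rw [PMF.toOuterMeasure_apply]
      refine ENNReal.tsum_eq_zero.mpr fun x => ?_
      rw [Set.indicator_apply]
      split
      · rename_i hx
        rcases mul_eq_zero.mp (hqx x) with h | h
        · exact h
        · exact absurd h hx
      · rfl
    have hp : p.toOuterMeasure {x | g x ≠ 0} ≤ d := by
      have := H {x | g x ≠ 0}
      rwa [hq0, mul_zero, zero_add] at this
    calc ∑' x, p x * g x ≤ ∑' x, Set.indicator {x | g x ≠ 0} (⇑p) x := by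
          refine ENNReal.tsum_le_tsum fun x => ?_
          rw [Set.indicator_apply]
          split
          · exact le_trans (mul_le_mul_right (hg x) _) (by rw [mul_one])
          · rename_i hx
            have : g x = 0 := by simpa [Set.mem_setOf_eq] using hx
            simp [this]
      _ = p.toOuterMeasure {x | g x ≠ 0} := (PMF.toOuterMeasure_apply _ _).symm
      _ ≤ d := hp
      _ ≤ c * ∑' x, q x * g x + d := le_add_self
  · by_cases hc : c = ⊤
    · have : c * ∑' x, q x * g x = ⊤ := by
        rw [hc]; exact ENNReal.top_mul hq
      rw [this]; exact le_top.trans (le_add_right le_rfl)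
    by_cases hd : d = ⊤
    · rw [hd]; exact le_top.trans le_rfl |>.trans (le_add_self.trans le_rfl) |>.trans le_rfl
    -- main case
    refine ENNReal.le_of_forall_pos_le_add fun ε hε _ => ?_
    obtain ⟨n, hn⟩ := ENNReal.exists_inv_two_pow_lt (a := (ε : ℝ≥0∞)) (by simpa using hε.ne')
    set N : ℕ := 2 ^ n with hN
    have hNR : (0:ℝ) < (N:ℝ) := by positivity
    have hN0 : (N : ℝ≥0∞) ≠ 0 := by positivity
    have hNtop : (N : ℝ≥0∞) ≠ ⊤ := ENNReal.natCast_ne_top N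
    set M : X → ℕ := fun x => ⌊(g x).toReal * N⌋₊ with hM
    have hMle : ∀ x, M x ≤ N := by
      intro x
      have h1 : (g x).toReal ≤ 1 := by
        have := ENNReal.toReal_mono (by simp) (hg x)
        simpa using this
      have : (g x).toReal * N ≤ (N:ℝ) := by nlinarith [ENNReal.toReal_nonneg (a := g x)]
      calc M x ≤ ⌊(N:ℝ)⌋₊ := Nat.floor_le_floor this
        _ = N := by simp
    set gn : X → ℝ≥0∞ := fun x => (M x : ℝ≥0∞) * (N : ℝ≥0∞)⁻¹ with hgn
    have hgtop : ∀ x, g x ≠ ⊤ := fun x => (lt_of_le_of_lt (hg x) (by simp)).ne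
    -- gn ≤ g
    have hgnle : ∀ x, gn x ≤ g x := by
      intro x
      have h1 : (M x : ℝ) ≤ (g x).toReal * N := Nat.floor_le (by positivity)
      have h2 : (M x : ℝ) * (N:ℝ)⁻¹ ≤ (g x).toReal := by
        rw [← div_eq_mul_inv]
        exact (div_le_iff₀ hNR).mpr h1
      have h3 : ENNReal.ofReal ((M x : ℝ) * (N:ℝ)⁻¹) ≤ ENNReal.ofReal (g x).toReal :=
        ENNReal.ofReal_le_ofReal h2
      rwa [ENNReal.ofReal_toReal (hgtop x), ENNReal.ofReal_mul (by positivity),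
        ENNReal.ofReal_natCast, ENNReal.ofReal_inv_of_pos hNR, ENNReal.ofReal_natCast] at h3
    -- g ≤ gn + N⁻¹
    have hggn : ∀ x, g x ≤ gn x + (N:ℝ≥0∞)⁻¹ := by
      intro x
      have h1 : (g x).toReal * N < (M x : ℝ) + 1 := Nat.lt_floor_add_one _
      have h2 : (g x).toReal ≤ ((M x : ℝ) + 1) * (N:ℝ)⁻¹ := by
        rw [← div_eq_mul_inv, le_div_iff₀ hNR]
        linarith
      have h3 : ENNReal.ofReal (g x).toReal ≤ ENNReal.ofReal (((M x : ℝ) + 1) * (N:ℝ)⁻¹) :=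
        ENNReal.ofReal_le_ofReal h2
      rw [ENNReal.ofReal_toReal (hgtop x), ENNReal.ofReal_mul (by positivity),
        ENNReal.ofReal_inv_of_pos hNR, ENNReal.ofReal_add (by positivity) (by norm_num),
        ENNReal.ofReal_natCast, ENNReal.ofReal_one, ENNReal.ofReal_natCast] at h3
      calc g x ≤ ((M x : ℝ≥0∞) + 1) * (N:ℝ≥0∞)⁻¹ := h3
        _ = gn x + (N:ℝ≥0∞)⁻¹ := by rw [add_mul, one_mul]
    -- key middle bound
    have hmid : ∑' x, p x * gn x ≤ c * ∑' x, q x * gn x + d := by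
      have hrw : ∀ r : PMF X, ∑' x, r x * gn x =
          (∑ j ∈ Finset.range N, r.toOuterMeasure {x | j < M x}) * (N:ℝ≥0∞)⁻¹ := by
        intro r
        calc ∑' x, r x * gn x = ∑' x, (r x * (M x : ℝ≥0∞)) * (N:ℝ≥0∞)⁻¹ := by
              exact tsum_congr fun x => by rw [hgn]; ring
          _ = (∑' x, r x * (M x : ℝ≥0∞)) * (N:ℝ≥0∞)⁻¹ := ENNReal.tsum_mul_right
          _ = _ := by rw [tsum_mul_nat r M N hMle]
      rw [hrw p, hrw q]
      have hsum : (∑ j ∈ Finset.range N, p.toOuterMeasure {x | j < M x}) ≤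
          c * (∑ j ∈ Finset.range N, q.toOuterMeasure {x | j < M x}) + N * d := by
        calc (∑ j ∈ Finset.range N, p.toOuterMeasure {x | j < M x})
            ≤ ∑ j ∈ Finset.range N, (c * q.toOuterMeasure {x | j < M x} + d) :=
              Finset.sum_le_sum fun j _ => H _
          _ = c * (∑ j ∈ Finset.range N, q.toOuterMeasure {x | j < M x}) + N * d := by
              rw [Finset.sum_add_distrib, ← Finset.mul_sum, Finset.sum_const,
                Finset.card_range, nsmul_eq_mul]
      calc (∑ j ∈ Finset.range N, p.toOuterMeasure {x | j < M x}) * (N:ℝ≥0∞)⁻¹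
          ≤ (c * (∑ j ∈ Finset.range N, q.toOuterMeasure {x | j < M x}) + N * d) * (N:ℝ≥0∞)⁻¹ :=
            mul_le_mul_left hsum _
        _ = c * ((∑ j ∈ Finset.range N, q.toOuterMeasure {x | j < M x}) * (N:ℝ≥0∞)⁻¹) +
              (N * (N:ℝ≥0∞)⁻¹) * d := by ring
        _ = _ := by rw [ENNReal.mul_inv_cancel hN0 hNtop, one_mul]
    --  assemble
    have hstep : ∑' x, p x * g x ≤ ∑' x, p x * gn x + (N:ℝ≥0∞)⁻¹ := by
      calc ∑' x, p x * g x ≤ ∑' x, p x * (gn x + (N:ℝ≥0∞)⁻¹) :=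
            ENNReal.tsum_le_tsum fun x => mul_le_mul_right (hggn x) _
        _ = ∑' x, (p x * gn x + p x * (N:ℝ≥0∞)⁻¹) := tsum_congr fun x => mul_add _ _ _
        _ = ∑' x, p x * gn x + (∑' x, p x) * (N:ℝ≥0∞)⁻¹ := by
            rw [ENNReal.tsum_add, ENNReal.tsum_mul_right]
        _ = ∑' x, p x * gn x + (N:ℝ≥0∞)⁻¹ := by rw [PMF.tsum_coe, one_mul]
    have hqq : ∑' x, q x * gn x ≤ ∑' x, q x * g x :=
      ENNReal.tsum_le_tsum fun x => mul_le_mul_right (hgnle x) _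
    have hNe : ((N:ℝ≥0∞))⁻¹ ≤ (ε : ℝ≥0∞) := by
      have : ((2:ℝ≥0∞))⁻¹ ^ n = ((N:ℝ≥0∞))⁻¹ := by
        rw [hN, ← ENNReal.inv_pow]
        norm_num
      rw [← this]
      exact hn.le
    calc ∑' x, p x * g x ≤ ∑' x, p x * gn x + (N:ℝ≥0∞)⁻¹ := hstep
      _ ≤ (c * ∑' x, q x * gn x + d) + (N:ℝ≥0∞)⁻¹ := add_le_add_left hmid _
      _ ≤ (c * ∑' x, q x * g x + d) + (ε:ℝ≥0∞) :=
          add_le_add (add_le_add_left (mul_le_mul_right hqq _) _) hNe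

lemma dpclose_bind {p q : PMF X} {f g : X → PMF Y} {c1 d1 c2 d2 : ℝ≥0∞}
    (h1 : DPClose p q c1 d1) (h2 : ∀ x, DPClose (f x) (g x) c2 d2) :
    DPClose (p.bind f) (q.bind g) (c1 * c2) (d1 + d2) := by
  intro s
  rw [PMF.toOuterMeasure_bind_apply, PMF.toOuterMeasure_bind_apply]
  set h : X → ℝ≥0∞ := fun x => min 1 (c2 * (g x).toOuterMeasure s) with hh
  have hle1 : ∀ x, h x ≤ 1 := fun x => min_le_left _ _
  have step1 : ∀ x, (f x).toOuterMeasure s ≤ h x + d2 := by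
    intro x
    have hF1 : (f x).toOuterMeasure s ≤ 1 := toOM_le_one _ _
    have hF2 : (f x).toOuterMeasure s ≤ c2 * (g x).toOuterMeasure s + d2 := h2 x s
    have : (f x).toOuterMeasure s ≤ min 1 (c2 * (g x).toOuterMeasure s + d2) :=
      le_min hF1 hF2
    refine this.trans ?_
    calc min 1 (c2 * (g x).toOuterMeasure s + d2)
        ≤ min (1 + d2) (c2 * (g x).toOuterMeasure s + d2) :=
          min_le_min (le_add_right le_rfl) le_rfl
      _ = h x + d2 := by rw [hh, min_add_add_right]
  calc ∑' x, p x * (f x).toOuterMeasure s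
      ≤ ∑' x, p x * (h x + d2) :=
        ENNReal.tsum_le_tsum fun x => mul_le_mul_right (step1 x) _
    _ = ∑' x, p x * h x + d2 := by
        simp only [mul_add]
        rw [ENNReal.tsum_add, ENNReal.tsum_mul_right, PMF.tsum_coe, one_mul]
    _ ≤ (c1 * ∑' x, q x * h x + d1) + d2 :=
        add_le_add_left (tsum_mul_le_of_dpclose h1 h hle1) _
    _ ≤ (c1 * (c2 * ∑' x, q x * (g x).toOuterMeasure s) + d1) + d2 := by
        refine add_le_add_left (add_le_add_left (mul_le_mul_right ?_ _) _) _
        calc ∑' x, q x * h x ≤ ∑' x, q x * (c2 * (g x).toOuterMeasure s) :=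
              ENNReal.tsum_le_tsum fun x => mul_le_mul_right (min_le_right _ _) _
          _ = c2 * ∑' x, q x * (g x).toOuterMeasure s := by
              rw [← ENNReal.tsum_mul_left]
              exact tsum_congr fun x => by ring
    _ = c1 * c2 * ∑' x, q x * (g x).toOuterMeasure s + (d1 + d2) := by ring

/-- Finite product of PMFs over `Fin n`. -/
def pmfPi : {n : ℕ} → (Fin n → PMF X) → PMF (Fin n → X)
  | 0, _ => PMF.pure (fun i => i.elim0)
  | _ + 1, P => (P 0).bind fun x0 =>
      (pmfPi (fun i => P i.succ)).bind fun r => PMF.pure (Fin.cons x0 r)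

lemma pmfPi_succ {n : ℕ} (P : Fin (n+1) → PMF X) :
    pmfPi P = (P 0).bind fun x0 =>
      (pmfPi (fun i => P i.succ)).bind fun r => PMF.pure (Fin.cons x0 r : Fin (n+1) → X) :=
  rfl

lemma dpclose_pi {n : ℕ} (P Q : Fin n → PMF X) (c d : Fin n → ℝ≥0∞)
    (h : ∀ j, DPClose (P j) (Q j) (c j) (d j)) :
    DPClose (pmfPi P) (pmfPi Q) (∏ j, c j) (∑ j, d j) := by
  induction n with
  | zero => simpa [pmfPi] using dpclose_refl (X := Fin 0 → X) (PMF.pure (fun i => i.elim0))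
  | succ n ih =>
    have inner : ∀ x0 : X,
        DPClose ((pmfPi fun i => P i.succ).bind
            fun r => PMF.pure (Fin.cons x0 r : Fin (n+1) → X))
          ((pmfPi fun i => Q i.succ).bind
            fun r => PMF.pure (Fin.cons x0 r : Fin (n+1) → X))
          ((∏ j : Fin n, c (Fin.succ j)) * 1) ((∑ j : Fin n, d (Fin.succ j)) + 0) := fun x0 =>
      dpclose_bind (ih _ _ _ _ fun j => h j.succ) (fun r => dpclose_refl _)
    have hmain := dpclose_bind (h 0) inner
    have hc : c 0 * ((∏ j : Fin n, c (Fin.succ j)) * 1) = ∏ j, c j := by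
      rw [mul_one, ← Fin.prod_univ_succ]
    have hd : d 0 + ((∑ j : Fin n, d (Fin.succ j)) + 0) = ∑ j, d j := by
      rw [add_zero, ← Fin.sum_univ_succ]
    rw [pmfPi_succ P, pmfPi_succ Q]
    rw [hc, hd] at hmain
    exact hmain

lemma pmfPi_marginal {n : ℕ} (P : Fin n → PMF X) (j : Fin n) (A : Set X) :
    (pmfPi P).toOuterMeasure {x | x j ∈ A} = (P j).toOuterMeasure A := by
  classical
  induction n with
  | zero => exact j.elim0
  | succ n ih =>
    rw [pmfPi_succ P, PMF.toOuterMeasure_bind_apply]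
    induction j using Fin.cases with
    | zero =>
      have hinner : ∀ x0 : X,
          ((pmfPi (fun i => P i.succ)).bind
              (fun r => PMF.pure (Fin.cons x0 r : Fin (n+1) → X))).toOuterMeasure
            {x : Fin (n+1) → X | x 0 ∈ A} = if x0 ∈ A then 1 else 0 := by
        intro x0
        rw [PMF.toOuterMeasure_bind_apply]
        calc ∑' r, (pmfPi fun i => P i.succ) r *
              (PMF.pure (Fin.cons x0 r : Fin (n+1) → X)).toOuterMeasure
                {x : Fin (n+1) → X | x 0 ∈ A}
            = ∑' r, (pmfPi fun i => P i.succ) r * (if x0 ∈ A then 1 else 0) := by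
              refine tsum_congr fun r => ?_
              rw [PMF.toOuterMeasure_pure_apply]
              simp only [Set.mem_setOf_eq, Fin.cons_zero]
          _ = (if x0 ∈ A then 1 else 0) := by
              rw [ENNReal.tsum_mul_right, PMF.tsum_coe, one_mul]
      calc ∑' x0, P 0 x0 *
            ((pmfPi fun i => P i.succ).bind
              (fun r => PMF.pure (Fin.cons x0 r : Fin (n+1) → X))).toOuterMeasure
              {x : Fin (n+1) → X | x 0 ∈ A}
          = ∑' x0, P 0 x0 * (if x0 ∈ A then 1 else 0) :=
            tsum_congr fun x0 => by rw [hinner x0]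
        _ = (P 0).toOuterMeasure A := by
            rw [PMF.toOuterMeasure_apply]
            exact tsum_congr fun x0 => by rw [Set.indicator_apply]; split <;> simp
    | succ j' =>
      have hinner : ∀ x0 : X,
          ((pmfPi (fun i => P i.succ)).bind
              (fun r => PMF.pure (Fin.cons x0 r : Fin (n+1) → X))).toOuterMeasure
            {x : Fin (n+1) → X | x j'.succ ∈ A} = (P j'.succ).toOuterMeasure A := by
        intro x0
        rw [PMF.toOuterMeasure_bind_apply]
        calc ∑' r, (pmfPi fun i => P i.succ) r *
              (PMF.pure (Fin.cons x0 r : Fin (n+1) → X)).toOuterMeasure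
                {x : Fin (n+1) → X | x j'.succ ∈ A}
            = ∑' r, (pmfPi fun i => P i.succ) r *
                Set.indicator {r : Fin n → X | r j' ∈ A} 1 r := by
              refine tsum_congr fun r => ?_
              rw [PMF.toOuterMeasure_pure_apply, Set.indicator_apply]
              simp only [Set.mem_setOf_eq, Fin.cons_succ, Pi.one_apply]
          _ = (pmfPi fun i => P i.succ).toOuterMeasure {r : Fin n → X | r j' ∈ A} := by
              rw [PMF.toOuterMeasure_apply]
              refine tsum_congr fun r => ?_
              rw [Set.indicator_apply, Set.indicator_apply]
              split <;> simp
          _ = (P j'.succ).toOuterMeasure A := ih (fun i => P i.succ) j'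
      calc ∑' x0, P 0 x0 *
            ((pmfPi fun i => P i.succ).bind
              (fun r => PMF.pure (Fin.cons x0 r : Fin (n+1) → X))).toOuterMeasure
              {x : Fin (n+1) → X | x j'.succ ∈ A}
          = ∑' x0, P 0 x0 * (P j'.succ).toOuterMeasure A :=
            tsum_congr fun x0 => by rw [hinner x0]
        _ = (P j'.succ).toOuterMeasure A := by
            rw [ENNReal.tsum_mul_right, PMF.tsum_coe, one_mul]

lemma dpclose_map {p q : PMF X} {c d : ℝ≥0∞} (f : X → Y)
    (h : DPClose p q c d) : DPClose (p.map f) (q.map f) c d := by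
  intro s
  rw [PMF.toOuterMeasure_map_apply, PMF.toOuterMeasure_map_apply]
  exact h _

/-- Window count as a sum over offsets. -/
lemma winCount_window {T' U : ℕ} (S' : Dataset T' U) (i W : ℕ) (h : i + W ≤ T') (u : Fin U) :
    winCount S' (i+1) (i+W) u =
      ∑ s ∈ Finset.range W, (if h2 : i + s < T' then S' ⟨i+s, h2⟩ u else 0) := by
  classical
  set F : ℕ → ℕ := fun m =>
    if hm : m < T' then (if i ≤ m ∧ m < i+W then S' ⟨m, hm⟩ u else 0) else 0 with hF
  have e1 : winCount S' (i+1) (i+W) u = ∑ m ∈ Finset.range T', F m := by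
    unfold winCount
    rw [← Fin.sum_univ_eq_sum_range]
    refine Finset.sum_congr rfl fun t _ => ?_
    rw [hF]
    simp only
    rw [dif_pos t.isLt]
    exact if_congr (by omega) rfl rfl
  have e2 : ∑ m ∈ Finset.range T', F m = ∑ m ∈ Finset.Ico i (i+W), F m := by
    refine (Finset.sum_subset ?_ ?_).symm
    · intro m hm
      simp only [Finset.mem_Ico] at hm
      simp only [Finset.mem_range]
      omega
    · intro m _ hm
      simp only [Finset.mem_Ico, not_and, not_lt] at hm
      rw [hF]
      simp only
      split
      · rw [if_neg (by omega)]
      · rfl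
  have e3 : ∑ m ∈ Finset.Ico i (i+W), F m = ∑ s ∈ Finset.range W, F (i + s) := by
    rw [Finset.sum_Ico_eq_sum_range, Nat.add_sub_cancel_left]
  rw [e1, e2, e3]
  refine Finset.sum_congr rfl fun s hs => ?_
  simp only [Finset.mem_range] at hs
  rw [hF]
  simp only
  by_cases him : i + s < T'
  · rw [dif_pos him, dif_pos him, if_pos (by omega)]
  · rw [dif_neg him, dif_neg him]

/-- The horizon-`2W` segment of a dataset starting at time `j*W` (0-indexed). -/
def segD (W T U : ℕ) (j : ℕ) (S : Dataset T U) : Dataset (2*W) U :=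
  fun t u => if h : j*W + (t:ℕ) < T then S ⟨j*W + (t:ℕ), h⟩ u else 0

lemma eventNeighbor_segD {T U : ℕ} (W j : ℕ) (S S' : Dataset T U)
    (h : EventNeighbor S S') : EventNeighbor (segD W T U j S) (segD W T U j S') := by
  classical
  unfold EventNeighbor at h ⊢
  set F : ℕ → ℕ := fun m =>
    if hm : m < T then ∑ u, ((S ⟨m,hm⟩ u : ℤ) - (S' ⟨m,hm⟩ u : ℤ)).natAbs else 0 with hF
  have hglob : (∑ t : Fin T, ∑ u, ((S t u : ℤ) - (S' t u : ℤ)).natAbs)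
      = ∑ m ∈ Finset.range T, F m := by
    rw [← Fin.sum_univ_eq_sum_range]
    refine Finset.sum_congr rfl fun t _ => ?_
    rw [hF]; simp only; rw [dif_pos t.isLt]
  have hseg : (∑ t : Fin (2*W), ∑ u, ((segD W T U j S t u : ℤ)
        - (segD W T U j S' t u : ℤ)).natAbs)
      = ∑ m ∈ Finset.range (2*W), F (j*W + m) := by
    rw [← Fin.sum_univ_eq_sum_range]
    refine Finset.sum_congr rfl fun t _ => ?_
    rw [hF]; simp only
    by_cases hm : j*W + (t:ℕ) < T
    · rw [dif_pos hm]
      refine Finset.sum_congr rfl fun u _ => ?_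
      simp only [segD, dif_pos hm]
    · rw [dif_neg hm]
      refine Finset.sum_eq_zero fun u _ => ?_
      simp [segD, dif_neg hm]
  rw [hglob] at h
  rw [hseg]
  refine le_trans ?_ h
  calc ∑ m ∈ Finset.range (2*W), F (j*W + m)
      = ∑ m ∈ Finset.Ico (j*W) (j*W + 2*W), F m := by
        rw [Finset.sum_Ico_eq_sum_range, Nat.add_sub_cancel_left]
    _ = ∑ m ∈ (Finset.Ico (j*W) (j*W + 2*W)).filter (fun m => m < T), F m := by
        refine (Finset.sum_filter_of_ne fun m _ hne => ?_).symm
        by_contra hT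
        exact hne (by rw [hF]; simp only; rw [dif_neg hT])
    _ ≤ ∑ m ∈ Finset.range T, F m := by
        refine Finset.sum_le_sum_of_subset ?_
        intro m hm
        simp only [Finset.mem_filter] at hm
        simp only [Finset.mem_range]
        exact hm.2

lemma freqGe_segD (k W T U : ℕ) (S : Dataset T U) (j r : ℕ)
    (hr : r < W) (hT : j*W + r + W ≤ T) :
    freqGe k (segD W T U j S) (r+1) (r+W) = freqGe k S (j*W + r + 1) (j*W + r + W) := by
  unfold freqGe
  congr 1
  refine Finset.filter_congr fun u _ => ?_
  have hwc : winCount (segD W T U j S) (r+1) (r+W) u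
      = winCount S (j*W + r + 1) (j*W + r + W) u := by
    rw [winCount_window (segD W T U j S) r W (by omega) u,
      winCount_window S (j*W + r) W hT u]
    refine Finset.sum_congr rfl fun s hs => ?_
    simp only [Finset.mem_range] at hs
    have h1 : r + s < 2*W := by omega
    have h2 : j*W + (r + s) < T := by omega
    have h3 : j*W + r + s < T := by omega
    rw [dif_pos h1]
    show (if h : j*W + (r+s) < T then S ⟨j*W + (r+s), h⟩ u else 0) = _
    rw [dif_pos h2, dif_pos h3]
    have hidx : (⟨j*W + (r+s), h2⟩ : Fin T) = ⟨j*W + r + s, h3⟩ := Fin.ext (by show j*W + (r+s) = j*W + r + s; omega)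
    rw [hidx]
  rw [hwc]

end
end HR

/-- time-horizon reduction for fixed-window `freq≥k` under
event-level DP in the bundle setting: an `(ε/2, δ/2)`-DP algorithm for horizon
`2W` yields an `(ε, δ)`-DP algorithm for horizon `T`. -/
theorem fixed_window_horizon_reduction_event (k W T U : ℕ)
    (hk : 0 < k) (hW : 0 < W) (hWT : W ≤ T) (hU : 0 < U)
    (ε δ α β : ℝ) (hε : 0 ≤ ε) (hδ : 0 ≤ δ) (hα : 0 ≤ α) (hβ0 : 0 ≤ β) (hβ1 : β ≤ 1)
    (h : ∃ M₁ : Dataset (2 * W) U → PMF (Fin (2 * W - W + 1) → ℝ),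
      IsDP EventNeighbor M₁ (ε / 2) (δ / 2) ∧ HasUtility M₁ (fwVal k W) α β) :
    ∃ M₂ : Dataset T U → PMF (Fin (T - W + 1) → ℝ),
      IsDP EventNeighbor M₂ ε δ ∧ HasUtility M₂ (fwVal k W) α β := by

  classical
  obtain ⟨M₁, hDP, hU₁⟩ := h
  have hBlt : ∀ i : Fin (T - W + 1), (i:ℕ)/W < (T - W)/W + 1 := by
    intro i
    have hi : (i:ℕ) ≤ T - W := by omega
    have : (i:ℕ)/W ≤ (T-W)/W := Nat.div_le_div_right hi
    omega
  have hofflt : ∀ i : Fin (T - W + 1), (i:ℕ)%W < 2*W - W + 1 := by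
    intro i
    have := Nat.mod_lt (i:ℕ) hW
    omega
  have heqi : ∀ i : Fin (T - W + 1), ((i:ℕ)/W)*W + (i:ℕ)%W = (i:ℕ) := fun i => by
    rw [mul_comm]; exact Nat.div_add_mod _ _
  have hfw : ∀ (S : Dataset T U) (i : Fin (T - W + 1)),
      fwVal k W (HR.segD W T U ((i:ℕ)/W) S) ⟨(i:ℕ)%W, hofflt i⟩ = fwVal k W S i := by
    intro S i
    have hT2 : ((i:ℕ)/W)*W + (i:ℕ)%W + W ≤ T := by
      rw [heqi i]
      have : (i:ℕ) ≤ T - W := by omega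
      omega
    have hg := HR.freqGe_segD k W T U S ((i:ℕ)/W) ((i:ℕ)%W) (Nat.mod_lt _ hW) hT2
    rw [heqi i] at hg
    show (↑(freqGe k (HR.segD W T U ((i:ℕ)/W) S) ((i:ℕ)%W + 1) ((i:ℕ)%W + W)) : ℝ)
      = ↑(freqGe k S ((i:ℕ)+1) ((i:ℕ)+W))
    exact_mod_cast hg
  refine ⟨fun S => PMF.map
      (fun (x : Fin ((T-W)/W + 1) → (Fin (2*W - W + 1) → ℝ)) (i : Fin (T - W + 1)) =>
        x ⟨(i:ℕ)/W, hBlt i⟩ ⟨(i:ℕ)%W, hofflt i⟩)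
      (HR.pmfPi (fun j : Fin ((T-W)/W + 1) => M₁ (HR.segD W T U (j:ℕ) S))), ?_, ?_⟩
  · -- privacy
    intro S S' hnb s
    have hsegnb : ∀ j : ℕ, EventNeighbor (HR.segD W T U j S) (HR.segD W T U j S') :=
      fun j => HR.eventNeighbor_segD W j S S' hnb
    have hper : ∀ j : Fin ((T-W)/W + 1),
        HR.DPClose (M₁ (HR.segD W T U (j:ℕ) S)) (M₁ (HR.segD W T U (j:ℕ) S'))
          (if HR.segD W T U (j:ℕ) S = HR.segD W T U (j:ℕ) S' then 1
            else ENNReal.ofReal (Real.exp (ε/2)))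
          (if HR.segD W T U (j:ℕ) S = HR.segD W T U (j:ℕ) S' then 0
            else ENNReal.ofReal (δ/2)) := by
      intro j
      by_cases hj : HR.segD W T U (j:ℕ) S = HR.segD W T U (j:ℕ) S'
      · rw [if_pos hj, if_pos hj, hj]
        exact HR.dpclose_refl _
      · rw [if_neg hj, if_neg hj]
        intro s2
        exact hDP _ _ (hsegnb (j:ℕ)) s2
    have hpi := HR.dpclose_pi _ _ _ _ hper
    have hmap := HR.dpclose_map
      (fun (x : Fin ((T-W)/W + 1) → (Fin (2*W - W + 1) → ℝ)) (i : Fin (T - W + 1)) =>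
        x ⟨(i:ℕ)/W, hBlt i⟩ ⟨(i:ℕ)%W, hofflt i⟩) hpi
    have hcard : (Finset.univ.filter (fun j : Fin ((T-W)/W + 1) =>
        ¬ HR.segD W T U (j:ℕ) S = HR.segD W T U (j:ℕ) S')).card ≤ 2 := by
      by_cases hall : ∀ (t : Fin T) (u : Fin U), S t u = S' t u
      · have hSS : ∀ j : ℕ, HR.segD W T U j S = HR.segD W T U j S' := by
          intro j; funext t u
          simp only [HR.segD]
          split
          · exact hall _ _
          · rfl
        have hemp : (Finset.univ.filter (fun j : Fin ((T-W)/W + 1) =>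
            ¬ HR.segD W T U (j:ℕ) S = HR.segD W T U (j:ℕ) S')) = ∅ := by
          refine Finset.filter_false_of_mem fun j _ => ?_
          exact not_not_intro (hSS (j:ℕ))
        rw [hemp]
        simp
      · push_neg at hall
        obtain ⟨t₀, u₀, ht₀⟩ := hall
        have huniq : ∀ (t : Fin T) (u : Fin U), S t u ≠ S' t u → t = t₀ := by
          intro t u htu
          by_contra hne
          have hb : ∀ (t' : Fin T) (u' : Fin U), S t' u' ≠ S' t' u' →
              1 ≤ ((S t' u' : ℤ) - (S' t' u' : ℤ)).natAbs := by
            intro t' u' hd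
            have hz : ((S t' u' : ℤ) - (S' t' u' : ℤ)) ≠ 0 := by
              intro hz0
              exact hd (by exact_mod_cast sub_eq_zero.mp hz0)
            omega
          have hpair : ((t,u) : Fin T × Fin U) ≠ (t₀,u₀) := by
            intro hp
            exact hne (congrArg Prod.fst hp)
          have hsum2 : 2 ≤ ∑ p : Fin T × Fin U,
              ((S p.1 p.2 : ℤ) - (S' p.1 p.2 : ℤ)).natAbs := by
            calc 2 ≤ ∑ p ∈ ({(t,u), (t₀,u₀)} : Finset (Fin T × Fin U)),
                  ((S p.1 p.2 : ℤ) - (S' p.1 p.2 : ℤ)).natAbs := by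
                  rw [Finset.sum_pair hpair]
                  show (2:ℕ) ≤ ((S t u : ℤ) - (S' t u : ℤ)).natAbs
                    + ((S t₀ u₀ : ℤ) - (S' t₀ u₀ : ℤ)).natAbs
                  have h1 := hb t u htu
                  have h2 := hb t₀ u₀ ht₀
                  omega
              _ ≤ _ := Finset.sum_le_sum_of_subset (Finset.subset_univ _)
          have hglob : (∑ p : Fin T × Fin U,
                ((S p.1 p.2 : ℤ) - (S' p.1 p.2 : ℤ)).natAbs)
              = ∑ t : Fin T, ∑ u : Fin U, ((S t u : ℤ) - (S' t u : ℤ)).natAbs := by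
            rw [Fintype.sum_prod_type]
          unfold EventNeighbor at hnb
          omega
        have hmem : ∀ j ∈ Finset.univ.filter (fun j : Fin ((T-W)/W + 1) =>
            ¬ HR.segD W T U (j:ℕ) S = HR.segD W T U (j:ℕ) S'),
            (j:ℕ) = (t₀:ℕ)/W ∨ (j:ℕ) = (t₀:ℕ)/W - 1 := by
          intro j hj
          simp only [Finset.mem_filter] at hj
          have hdiff : ∃ (t' : Fin (2*W)) (u' : Fin U),
              HR.segD W T U (j:ℕ) S t' u' ≠ HR.segD W T U (j:ℕ) S' t' u' := by
            by_contra hcon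
            push_neg at hcon
            exact hj.2 (funext fun t' => funext fun u' => hcon t' u')
          obtain ⟨t', u', hd⟩ := hdiff
          have hlt : (j:ℕ)*W + (t':ℕ) < T := by
            by_contra hge
            exact hd (by simp [HR.segD, dif_neg hge])
          have hST : S ⟨(j:ℕ)*W + (t':ℕ), hlt⟩ u' ≠ S' ⟨(j:ℕ)*W + (t':ℕ), hlt⟩ u' := by
            simpa [HR.segD, dif_pos hlt] using hd
          have ht0 := huniq _ _ hST
          have ht0v : (t₀:ℕ) = (j:ℕ)*W + (t':ℕ) := by rw [← ht0]
          have h1 : (j:ℕ) ≤ (t₀:ℕ)/W := (Nat.le_div_iff_mul_le hW).mpr (by omega)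
          have h2 : (t₀:ℕ)/W < (j:ℕ) + 2 := by
            rw [Nat.div_lt_iff_lt_mul hW]
            have h2W : ((j:ℕ) + 2) * W = (j:ℕ)*W + 2*W := by ring
            have ht' := t'.isLt
            omega
          omega
        calc (Finset.univ.filter (fun j : Fin ((T-W)/W + 1) =>
              ¬ HR.segD W T U (j:ℕ) S = HR.segD W T U (j:ℕ) S')).card
            = ((Finset.univ.filter (fun j : Fin ((T-W)/W + 1) =>
              ¬ HR.segD W T U (j:ℕ) S = HR.segD W T U (j:ℕ) S')).image Fin.val).card :=
              (Finset.card_image_of_injective _ Fin.val_injective).symm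
          _ ≤ ({(t₀:ℕ)/W, (t₀:ℕ)/W - 1} : Finset ℕ).card := by
              refine Finset.card_le_card ?_
              intro m hm
              simp only [Finset.mem_image] at hm
              obtain ⟨j, hj, rfl⟩ := hm
              simpa using hmem j hj
          _ ≤ 2 := le_trans (Finset.card_insert_le _ _) (by simp)
    have hE2 : (1:ℝ≥0∞) ≤ ENNReal.ofReal (Real.exp (ε/2)) := by
      rw [← ENNReal.ofReal_one]
      exact ENNReal.ofReal_le_ofReal (Real.one_le_exp (by linarith))
    have hprod : (∏ j : Fin ((T-W)/W + 1),
        (if HR.segD W T U (j:ℕ) S = HR.segD W T U (j:ℕ) S' then 1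
          else ENNReal.ofReal (Real.exp (ε/2)))) ≤ ENNReal.ofReal (Real.exp ε) := by
      rw [Finset.prod_ite, Finset.prod_const_one, one_mul, Finset.prod_const]
      calc ENNReal.ofReal (Real.exp (ε/2)) ^ (Finset.univ.filter (fun j : Fin ((T-W)/W + 1) =>
              ¬ HR.segD W T U (j:ℕ) S = HR.segD W T U (j:ℕ) S')).card
          ≤ ENNReal.ofReal (Real.exp (ε/2)) ^ 2 := pow_le_pow_right₀ hE2 hcard
        _ = ENNReal.ofReal (Real.exp ε) := by
            rw [sq, ← ENNReal.ofReal_mul (Real.exp_nonneg _), ← Real.exp_add, add_halves]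
    have hsum : (∑ j : Fin ((T-W)/W + 1),
        (if HR.segD W T U (j:ℕ) S = HR.segD W T U (j:ℕ) S' then 0
          else ENNReal.ofReal (δ/2))) ≤ ENNReal.ofReal δ := by
      rw [Finset.sum_ite, Finset.sum_const_zero, zero_add, Finset.sum_const, nsmul_eq_mul]
      calc ((Finset.univ.filter (fun j : Fin ((T-W)/W + 1) =>
              ¬ HR.segD W T U (j:ℕ) S = HR.segD W T U (j:ℕ) S')).card : ℝ≥0∞)
              * ENNReal.ofReal (δ/2)
          ≤ 2 * ENNReal.ofReal (δ/2) := by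
            refine mul_le_mul_left ?_ _
            exact_mod_cast hcard
        _ = ENNReal.ofReal δ := by
            rw [two_mul, ← ENNReal.ofReal_add (by linarith) (by linarith), add_halves]
    exact HR.dpclose_mono hmap hprod hsum s
  · -- utility
    intro S i
    rw [PMF.toOuterMeasure_map_apply]
    have hval := hfw S i
    have hsets : (fun (x : Fin ((T-W)/W + 1) → (Fin (2*W - W + 1) → ℝ))
          (i' : Fin (T - W + 1)) => x ⟨(i':ℕ)/W, hBlt i'⟩ ⟨(i':ℕ)%W, hofflt i'⟩) ⁻¹'
        {o | |o i - fwVal k W S i| ≤ α}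
        = {x : Fin ((T-W)/W + 1) → (Fin (2*W - W + 1) → ℝ) | x ⟨(i:ℕ)/W, hBlt i⟩ ∈
            {y | |y ⟨(i:ℕ)%W, hofflt i⟩
              - fwVal k W (HR.segD W T U ((i:ℕ)/W) S) ⟨(i:ℕ)%W, hofflt i⟩| ≤ α}} := by
      rw [hval]
      rfl
    rw [hsets, HR.pmfPi_marginal]
    exact hU₁ (HR.segD W T U ((i:ℕ)/W) S) ⟨(i:ℕ)%W, hofflt i⟩
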